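/- Let G be a group, A an abelian group, κ : G → A a group homomorphism, and β : A × A → Z(G) a symmetric bi-additive map with values in the center of G such that κ ∘ β = 0. Set χ(h,g) = β(κ(h), κ(g)) and define h ▷ g := g⁻¹ h g · χ(h,g). Then (G, ▷) is a pointed rack with distinguished element the identity 1: each right translation R_g is a bijection with inverse R_{g⁻¹}, the right self-distributivity (h₁ ▷ h₂) ▷ h₃ = (h₁ ▷ h₃) ▷ (h₂ ▷ h₃) holds, and h ▷ 1 = h, 1 ▷ h = 1. -/

import Mathlib

/-- The operation `h ▷ g = g⁻¹ h g · χ(h,g)`, with `χ(h,g) = β(κ(h),κ(g))` built from a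
homomorphism `κ : G → A` into an abelian group and a symmetric bi-additive center-valued `β`
with `κ ∘ β = 0`, makes `G` a pointed rack with distinguished element `1`. -/
theorem rack_structure_on_group {G A : Type*} [Group G] [AddCommGroup A]
    (κ : G → A) (hκ : ∀ g h : G, κ (g * h) = κ g + κ h)
    (β : A → A → G)
    (hcenter : ∀ a b : A, ∀ g : G, β a b * g = g * β a b)
    (hsymm : ∀ a b : A, β a b = β b a)
    (hadd : ∀ a a' b : A, β (a + a') b = β a b * β a' b)
    (hker : ∀ a b : A, κ (β a b) = 0) :
    let χ : G → G → G := fun h g => β (κ h) (κ g)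
    let op : G → G → G := fun h g => g⁻¹ * h * g * χ h g
    (∀ g : G, Function.Bijective (fun h => op h g)) ∧
    (∀ g h : G, op (op h g) g⁻¹ = h ∧ op (op h g⁻¹) g = h) ∧
    (∀ h₁ h₂ h₃ : G, op (op h₁ h₂) h₃ = op (op h₁ h₃) (op h₂ h₃)) ∧
    (∀ h : G, op h 1 = h ∧ op 1 h = 1) := by
  intro χ op
  -- basic facts
  have hκ1 : κ 1 = 0 := by
    have h := hκ 1 1
    rw [one_mul] at h
    exact (left_eq_add.mp h)
  have hκinv : ∀ g : G, κ g⁻¹ = -κ g := by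
    intro g
    have h := hκ g⁻¹ g
    rw [inv_mul_cancel, hκ1] at h
    exact eq_neg_of_add_eq_zero_left h.symm
  have hβ0 : ∀ b : A, β 0 b = 1 := by
    intro b
    have h := hadd 0 0 b
    rw [add_zero] at h
    exact (left_eq_mul.mp h)
  have hβ0' : ∀ a : A, β a 0 = 1 := fun a => (hsymm a 0).trans (hβ0 a)
  have hβneg : ∀ a b : A, β a b * β a (-b) = 1 := by
    intro a b
    rw [hsymm a b, hsymm a (-b), ← hadd, add_neg_cancel, hβ0]
  have hkop : ∀ h g : G, κ (g⁻¹ * h * g * β (κ h) (κ g)) = κ h := by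
    intro h g
    rw [hκ, hκ, hκ, hker, hκinv]
    abel
  -- first cancellation
  have key1 : ∀ g h : G, op (op h g) g⁻¹ = h := by
    intro g h
    show (g⁻¹)⁻¹ * (g⁻¹ * h * g * β (κ h) (κ g)) * g⁻¹ *
        β (κ (g⁻¹ * h * g * β (κ h) (κ g))) (κ g⁻¹) = h
    rw [hkop, hκinv, inv_inv]
    calc g * (g⁻¹ * h * g * β (κ h) (κ g)) * g⁻¹ * β (κ h) (-κ g)
        = h * g * (β (κ h) (κ g) * g⁻¹) * β (κ h) (-κ g) := by group
      _ = h * g * (g⁻¹ * β (κ h) (κ g)) * β (κ h) (-κ g) := by rw [hcenter]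
      _ = h * (β (κ h) (κ g) * β (κ h) (-κ g)) := by group
      _ = h := by rw [hβneg, mul_one]
  have key2 : ∀ g h : G, op (op h g⁻¹) g = h := by
    intro g h
    have h1 := key1 g⁻¹ h
    rwa [inv_inv] at h1
  -- self-distributivity (abstract form with central elements)
  have aux : ∀ x y z B C D : G, (∀ g : G, B * g = g * B) → (∀ g : G, C * g = g * C) →
      (∀ g : G, D * g = g * D) →
      z⁻¹ * (y⁻¹ * x * y * B) * z * C =
        (z⁻¹ * y * z * D)⁻¹ * (z⁻¹ * x * z * C) * (z⁻¹ * y * z * D) * B := by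
    intro x y z B C D hB hC hD
    have hD' : ∀ g : G, D⁻¹ * g = g * D⁻¹ := fun g =>
      ((show Commute D g from hD g).inv_left).eq
    calc z⁻¹ * (y⁻¹ * x * y * B) * z * C
        = (z⁻¹ * y⁻¹ * x * y) * (B * z) * C := by group
      _ = (z⁻¹ * y⁻¹ * x * y) * (z * B) * C := by rw [hB]
      _ = z⁻¹ * y⁻¹ * x * y * z * (B * C) := by group
      _ = z⁻¹ * y⁻¹ * x * y * z * (C * B) := by rw [hC]
      _ = (z⁻¹ * y⁻¹ * x * y * z * C) * B := by group
      _ = (z⁻¹ * y * z * D)⁻¹ * (z⁻¹ * x * z * C) * (z⁻¹ * y * z * D) * B := by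
          have : (z⁻¹ * y * z * D)⁻¹ * (z⁻¹ * x * z * C) * (z⁻¹ * y * z * D)
              = z⁻¹ * y⁻¹ * x * y * z * C := by
            calc (z⁻¹ * y * z * D)⁻¹ * (z⁻¹ * x * z * C) * (z⁻¹ * y * z * D)
                = D⁻¹ * ((z⁻¹ * y⁻¹ * x * z) * (C * (z⁻¹ * y * z * D))) := by group
              _ = D⁻¹ * ((z⁻¹ * y⁻¹ * x * z) * ((z⁻¹ * y * z * D) * C)) := by rw [hC]
              _ = D⁻¹ * (z⁻¹ * y⁻¹ * x * y * z * D * C) := by group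
              _ = (z⁻¹ * y⁻¹ * x * y * z * D * C) * D⁻¹ := by rw [hD']
              _ = z⁻¹ * y⁻¹ * x * y * z * (C * D) * D⁻¹ := by
                    rw [mul_assoc (z⁻¹ * y⁻¹ * x * y * z), hD]
              _ = z⁻¹ * y⁻¹ * x * y * z * C := by group
          rw [this]
  have key3 : ∀ h₁ h₂ h₃ : G, op (op h₁ h₂) h₃ = op (op h₁ h₃) (op h₂ h₃) := by
    intro h₁ h₂ h₃
    show h₃⁻¹ * (h₂⁻¹ * h₁ * h₂ * β (κ h₁) (κ h₂)) * h₃ *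
        β (κ (h₂⁻¹ * h₁ * h₂ * β (κ h₁) (κ h₂))) (κ h₃) =
      (h₃⁻¹ * h₂ * h₃ * β (κ h₂) (κ h₃))⁻¹ * (h₃⁻¹ * h₁ * h₃ * β (κ h₁) (κ h₃)) *
        (h₃⁻¹ * h₂ * h₃ * β (κ h₂) (κ h₃)) *
        β (κ (h₃⁻¹ * h₁ * h₃ * β (κ h₁) (κ h₃))) (κ (h₃⁻¹ * h₂ * h₃ * β (κ h₂) (κ h₃)))
    rw [hkop, hkop, hkop]
    exact aux h₁ h₂ h₃ (β (κ h₁) (κ h₂)) (β (κ h₁) (κ h₃)) (β (κ h₂) (κ h₃))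
      (hcenter _ _) (hcenter _ _) (hcenter _ _)
  refine ⟨?_, fun g h => ⟨key1 g h, key2 g h⟩, key3, ?_⟩
  · intro g
    exact Function.bijective_iff_has_inverse.mpr
      ⟨fun h => op h g⁻¹, fun h => key1 g h, fun h => key2 g h⟩
  · intro h
    constructor
    · show 1⁻¹ * h * 1 * β (κ h) (κ 1) = h
      rw [hκ1, hβ0']
      group
    · show h⁻¹ * 1 * h * β (κ 1) (κ h) = 1
      rw [hκ1, hβ0]
      group
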